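/- Let ⊢¬ be the consequence relation on ¬-formulas determined by the matrix ⟨{0,1}, {1}⟩ with classical negation. If A is a nontrivial ¬-algebra and ⟨A, F⟩ is a reduced model of ⊢¬ (F is a deductive filter and the Leibniz congruence of F is the identity), then: A satisfies ¬¬x = x, ¬ has at most one fixed point in A, and F is either empty or a singleton {a} with ¬a ≠ a. -/
import Mathlib


/-- `F` is a deductive filter of the negation fragment `⊢¬` on the ¬-algebra
`⟨A, neg⟩`: it is closed, under all assignments, under the rules
`{x, ¬x} ⊢ y`, `{x} ⊢ ¬¬x` and `{¬¬x} ⊢ x`. -/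
def NegDedFilter {A : Type*} (neg : A → A) (F : Set A) : Prop :=
  (∀ a c : A, a ∈ F → neg a ∈ F → c ∈ F) ∧
  (∀ a : A, a ∈ F → neg (neg a) ∈ F) ∧
  (∀ a : A, neg (neg a) ∈ F → a ∈ F)

/-- The matrix `⟨A, F⟩` is reduced: the largest congruence of `⟨A, neg⟩`
compatible with `F` is the identity, i.e. every congruence compatible with `F`
is contained in the identity. -/
def NegReduced {A : Type*} (neg : A → A) (F : Set A) : Prop :=
  ∀ θ : A → A → Prop, Equivalence θ →
    (∀ x y, θ x y → θ (neg x) (neg y)) →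
    (∀ x y, θ x y → x ∈ F → y ∈ F) →
    ∀ x y, θ x y → x = y

/-- if `A` is a nontrivial ¬-algebra and `⟨A, F⟩` is a reduced
model of the negation fragment of classical logic, then `¬¬x = x` holds in
`A`, `¬` has at most one fixed point, and `F` is either empty or a singleton
`{a}` with `¬a ≠ a`. -/
theorem reduced_models_of_negation_fragment
    {A : Type*} [Nontrivial A] (neg : A → A) (F : Set A)
    (hF : NegDedFilter neg F) (hred : NegReduced neg F) :
    (∀ x, neg (neg x) = x) ∧
    (∀ x y, neg x = x → neg y = y → x = y) ∧
    (F = ∅ ∨ ∃ a : A, F = {a} ∧ neg a ≠ a) := by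
  obtain ⟨h1, h2, h3⟩ := hF
  have hnotboth : ∀ a : A, a ∈ F → neg a ∈ F → False := by
    intro a ha hna
    have hall : ∀ c : A, c ∈ F := fun c => h1 a c ha hna
    have := hred (fun _ _ => True) ⟨fun _ => trivial, fun _ => trivial, fun _ _ => trivial⟩
      (fun _ _ _ => trivial) (fun x y _ _ => hall y)
    obtain ⟨x, y, hxy⟩ := exists_pair_ne A
    exact hxy (this x y trivial)
  set θ : A → A → Prop := fun x y => ∀ n, neg^[n] x ∈ F ↔ neg^[n] y ∈ F with hθ
  have hEq : Equivalence θ :=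
    ⟨fun x n => Iff.rfl, fun h n => (h n).symm, fun h h' n => (h n).trans (h' n)⟩
  have hneg : ∀ x y, θ x y → θ (neg x) (neg y) := by
    intro x y h n
    simpa [Function.iterate_succ_apply] using h (n + 1)
  have hcomp : ∀ x y, θ x y → x ∈ F → y ∈ F := fun x y h hx => (h 0).mp hx
  have key := hred θ hEq hneg hcomp
  have hinv : ∀ x, neg (neg x) = x := by
    intro x
    apply key
    intro n
    have hrw : neg^[n] (neg (neg x)) = neg (neg (neg^[n] x)) := by
      rw [← Function.iterate_succ_apply, ← Function.iterate_succ_apply,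
        Function.iterate_succ_apply', Function.iterate_succ_apply']
    rw [hrw]
    exact ⟨fun h => h3 _ h, fun h => h2 _ h⟩
  have h2id : neg^[2] = id := by
    funext x
    exact hinv x
  have hparity : ∀ n : ℕ, neg^[n] = id ∨ neg^[n] = neg := by
    intro n
    rcases Nat.even_or_odd n with ⟨k, hk⟩ | ⟨k, hk⟩
    · left
      have hn : n = 2 * k := by omega
      rw [hn, Function.iterate_mul, h2id, Function.iterate_id]
    · right
      have hn : n = 2 * k + 1 := by omega
      funext c
      rw [hn, Function.iterate_succ_apply', Function.iterate_mul, h2id,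
        Function.iterate_id, id_eq]
  refine ⟨hinv, ?_, ?_⟩
  · intro x y hx hy
    have hxF : x ∉ F := fun h => hnotboth x h (by rwa [hx])
    have hyF : y ∉ F := fun h => hnotboth y h (by rwa [hy])
    apply key
    intro n
    rcases hparity n with h | h <;> simp [h, hx, hy, hxF, hyF]
  · by_cases hemp : F = ∅
    · exact Or.inl hemp
    · obtain ⟨a, ha⟩ := Set.nonempty_iff_ne_empty.mpr hemp
      right
      have hna : neg a ∉ F := fun h => hnotboth a ha h
      refine ⟨a, ?_, fun h => hna (by rwa [h])⟩
      ext b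
      simp only [Set.mem_singleton_iff]
      constructor
      · intro hb
        have hnb : neg b ∉ F := fun h => hnotboth b hb h
        refine (key b a ?_).symm ▸ rfl
        intro n
        rcases hparity n with h | h <;> simp [h, hb, ha, hnb, hna]
      · rintro rfl; exact ha
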